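/- Let H = ℝ³, C the closed unit ball, B the lower-triangular matrix of ones, A = BᵀB, and F x = A⁻¹ P x where P is the projection onto C. Then the couple (A,F) is monotone (indeed ⟨Ax−Ay, Fx−Fy⟩ = ⟨x−y, Px−Py⟩ ≥ ‖Px−Py‖² ≥ 0) and the solution set of GVI(A,F,C) equals {0}. -/

import Mathlib

open scoped RealInnerProductSpace
set_option maxHeartbeats 1000000

noncomputable def stmt19A : EuclideanSpace ℝ (Fin 3) → EuclideanSpace ℝ (Fin 3) :=
  fun x => WithLp.toLp 2 ![x 0 + x 1 + x 2, x 0 + 2 * x 1 + 2 * x 2, x 0 + 2 * x 1 + 3 * x 2]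

noncomputable def stmt19Ainv : EuclideanSpace ℝ (Fin 3) → EuclideanSpace ℝ (Fin 3) :=
  fun x => WithLp.toLp 2 ![2 * x 0 - x 1, -x 0 + 2 * x 1 - x 2, -x 1 + x 2]

lemma stmt19A_zero : stmt19A 0 = 0 := by
  ext i; fin_cases i <;> simp [stmt19A]

lemma stmt19Ainv_zero : stmt19Ainv 0 = 0 := by
  ext i; fin_cases i <;> simp [stmt19Ainv]

theorem stmt_19
    (C : Set (EuclideanSpace ℝ (Fin 3)))
    (hCdef : C = Metric.closedBall 0 1)
    (P : EuclideanSpace ℝ (Fin 3) → EuclideanSpace ℝ (Fin 3))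
    (hP : ∀ x, P x ∈ C ∧ ∀ y ∈ C, ‖x - P x‖ ≤ ‖x - y‖)
    (F : EuclideanSpace ℝ (Fin 3) → EuclideanSpace ℝ (Fin 3))
    (hF : ∀ x, F x = stmt19Ainv (P x)) :
    (∀ x y : EuclideanSpace ℝ (Fin 3),
      ⟪stmt19A x - stmt19A y, F x - F y⟫ = ⟪x - y, P x - P y⟫ ∧
      ⟪x - y, P x - P y⟫ ≥ ‖P x - P y‖ ^ 2 ∧
      (0 : ℝ) ≤ ⟪stmt19A x - stmt19A y, F x - F y⟫) ∧
    {x : EuclideanSpace ℝ (Fin 3) |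
      F x ∈ C ∧ ∀ y ∈ C, ⟪stmt19A x, y - F x⟫ ≥ 0} = {0} := by
  have hC0 : (0 : EuclideanSpace ℝ (Fin 3)) ∈ C := by simp [hCdef]
  haveI : Nonempty ↥C := ⟨⟨0, hC0⟩⟩
  have hP0 : P 0 = 0 := by
    have h := (hP 0).2 0 hC0
    simp only [zero_sub, norm_neg, sub_self, norm_zero] at h
    exact norm_le_zero_iff.mp h
  have key : ∀ x y : EuclideanSpace ℝ (Fin 3),
      ⟪stmt19A x - stmt19A y, F x - F y⟫ = ⟪x - y, P x - P y⟫ := by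
    intro x y
    rw [hF, hF]
    simp only [PiLp.inner_apply, Fin.sum_univ_three, PiLp.sub_apply, stmt19A, stmt19Ainv,
      RCLike.inner_apply, conj_trivial]
    simp
    ring
  have proj_ineq : ∀ x : EuclideanSpace ℝ (Fin 3), ∀ w ∈ C, ⟪x - P x, w - P x⟫ ≤ 0 := by
    intro x
    have hconv : Convex ℝ C := hCdef ▸ convex_closedBall 0 1
    rw [← norm_eq_iInf_iff_real_inner_le_zero hconv (hP x).1]
    refine le_antisymm (le_ciInf fun w => (hP x).2 w w.2) ?_
    have hbdd : BddBelow (Set.range fun w : ↥C => ‖x - (w : EuclideanSpace ℝ (Fin 3))‖) :=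
      ⟨0, by rintro _ ⟨w, rfl⟩; exact norm_nonneg _⟩
    exact ciInf_le hbdd (⟨P x, (hP x).1⟩ : ↥C)
  have firm : ∀ x y : EuclideanSpace ℝ (Fin 3), ⟪x - y, P x - P y⟫ ≥ ‖P x - P y‖ ^ 2 := by
    intro x y
    have h1 := proj_ineq x (P y) (hP y).1
    have h2 := proj_ineq y (P x) (hP x).1
    have hn : ‖P x - P y‖ ^ 2 = ⟪P x - P y, P x - P y⟫ := (real_inner_self_eq_norm_sq _).symm
    rw [hn]
    simp only [inner_sub_left, inner_sub_right] at h1 h2 ⊢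
    linarith [real_inner_comm (P x) (P y), real_inner_comm x (P y), real_inner_comm y (P x)]
  have F0 : F 0 = 0 := by rw [hF, hP0, stmt19Ainv_zero]
  constructor
  · intro x y
    refine ⟨key x y, firm x y, ?_⟩
    rw [key x y]
    exact le_trans (sq_nonneg _) (firm x y)
  · ext x
    simp only [Set.mem_setOf_eq, Set.mem_singleton_iff]
    constructor
    · rintro ⟨hFxC, hVI⟩
      by_cases hA : stmt19A x = 0
      · -- A x = 0 forces x = 0
        ext i
        have h0 : stmt19A x 0 = 0 := by rw [hA]; rfl
        have h1 : stmt19A x 1 = 0 := by rw [hA]; rfl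
        have h2 : stmt19A x 2 = 0 := by rw [hA]; rfl
        simp only [stmt19A, PiLp.toLp_apply, Matrix.cons_val_zero, Matrix.cons_val_one, Matrix.head_cons,
          Matrix.cons_val_two, Matrix.tail_cons] at h0 h1 h2
        fin_cases i <;> [skip; skip; skip] <;>
          · show x _ = 0
            first
            | (show x 0 = 0; linarith)
            | (show x 1 = 0; linarith)
            | (show x 2 = 0; linarith)
      · exfalso
        set a := stmt19A x with ha
        have hna : ‖a‖ ≠ 0 := norm_ne_zero_iff.mpr hA
        have hnapos : 0 < ‖a‖ := norm_pos_iff.mpr hA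
        set y : EuclideanSpace ℝ (Fin 3) := (-‖a‖⁻¹) • a with hy
        have hyC : y ∈ C := by
          rw [hCdef, Metric.mem_closedBall, dist_zero_right, hy, norm_smul]
          simp [abs_of_pos, hnapos, inv_mul_cancel₀ hna]
        have hy_inner : ⟪a, y⟫ = -‖a‖ := by
          rw [hy, real_inner_smul_right, real_inner_self_eq_norm_sq]
          field_simp
        have hmono : (0 : ℝ) ≤ ⟪a, F x⟫ := by
          have h := key x 0
          rw [stmt19A_zero, F0, sub_zero, sub_zero, sub_zero] at h
          rw [hP0, sub_zero] at h
          have := firm x 0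
          rw [hP0, sub_zero, sub_zero] at this
          rw [h]
          exact le_trans (sq_nonneg _) this
        have hVIy := hVI y hyC
        rw [inner_sub_right, hy_inner] at hVIy
        linarith
    · rintro rfl
      refine ⟨by rw [F0]; exact hC0, fun y hy => ?_⟩
      rw [stmt19A_zero, F0]
      simp
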